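/- Let $f_1 \in \mathrm{Sym}^{d_1}V_1$ and $f_2 \in \mathrm{Sym}^{d_2}V_2$ be nonzero homogeneous polynomials in disjoint variables and let $t = f_1 f_2 \in \mathrm{Sym}^\bullet(V_1 \oplus V_2)$. Then the apolar ideal of $t$ in $\mathrm{Sym}^\bullet(V_1^* \oplus V_2^*)$ equals the sum of the extensions of the apolar ideals of the factors: $t^\perp = (f_1^\perp)^{ext} + (f_2^\perp)^{ext}$, where $(f_i^\perp)^{ext}$ denotes the ideal generated by $f_i^\perp \subseteq \mathrm{Sym}^\bullet V_i^*$ in $\mathrm{Sym}^\bullet(V_1^* \oplus V_2^*)$. -/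

import Mathlib

open MvPolynomial

lemma pderiv_comm' {σ : Type*} [DecidableEq σ] (i j : σ) (f : MvPolynomial σ ℂ) :
    pderiv i (pderiv j f) = pderiv j (pderiv i f) := by
  induction f using MvPolynomial.induction_on with
  | C a => simp
  | add p q hp hq => simp [hp, hq]
  | mul_X p k hp =>
      simp only [pderiv_mul, map_add, hp, pderiv_X, Pi.single_apply]
      split_ifs <;> simp <;> ring

/-- The apolarity action: the algebra homomorphism from the polynomial ring in the
dual variables to endomorphisms of the polynomial ring, sending each dual variable to
the corresponding partial derivative. -/
noncomputable def diffHom (σ : Type*) [DecidableEq σ] :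
    MvPolynomial σ ℂ →ₐ[ℂ] Module.End ℂ (MvPolynomial σ ℂ) :=
  letI s : Set (Module.End ℂ (MvPolynomial σ ℂ)) :=
    Set.range fun i : σ => ((pderiv i : Derivation ℂ _ _) : MvPolynomial σ ℂ →ₗ[ℂ] MvPolynomial σ ℂ)
  letI hcomm : ∀ a ∈ s, ∀ b ∈ s, a * b = b * a := by
    rintro _ ⟨i, rfl⟩ _ ⟨j, rfl⟩
    exact LinearMap.ext fun f => pderiv_comm' i j f
  letI : CommSemiring (Algebra.adjoin ℂ s) := Algebra.adjoinCommSemiringOfComm ℂ hcomm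
  (Algebra.adjoin ℂ s).val.comp
    (aeval fun i : σ => (⟨_, Algebra.subset_adjoin ⟨i, rfl⟩⟩ : Algebra.adjoin ℂ s))

/-- The apolar ideal of a polynomial: the annihilator under the apolarity action. -/
noncomputable def apolarIdeal {σ : Type*} [DecidableEq σ] (f : MvPolynomial σ ℂ) :
    Ideal (MvPolynomial σ ℂ) where
  carrier := {D | diffHom σ D f = 0}
  zero_mem' := by simp
  add_mem' := by
    intro a b ha hb
    simp only [Set.mem_setOf_eq, map_add, LinearMap.add_apply] at *
    rw [ha, hb, add_zero]
  smul_mem' := by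
    intro c x hx
    simp only [Set.mem_setOf_eq, smul_eq_mul, map_mul, Module.End.mul_apply] at *
    rw [hx, map_zero]

lemma mem_apolarIdeal_iff {σ : Type*} [DecidableEq σ] (f D : MvPolynomial σ ℂ) :
    D ∈ apolarIdeal f ↔ diffHom σ D f = 0 := Iff.rfl

section Aux
variable {σ τ : Type*} [DecidableEq σ] [DecidableEq τ]

lemma diffHom_X_apply (i : σ) (f : MvPolynomial σ ℂ) :
    diffHom σ (X i) f = pderiv i f := by
  simp [diffHom]

lemma diffHom_C_apply (a : ℂ) (f : MvPolynomial σ ℂ) :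
    diffHom σ (C a) f = a • f := by
  rw [← algebraMap_eq, AlgHom.commutes, Module.algebraMap_end_apply]

lemma diffHom_mul_apply (p q : MvPolynomial σ ℂ) (f : MvPolynomial σ ℂ) :
    diffHom σ (p * q) f = diffHom σ p (diffHom σ q f) := by
  rw [map_mul, Module.End.mul_apply]

end Aux
section Aux2
variable {σ τ : Type*} [DecidableEq σ] [DecidableEq τ]

lemma pderiv_inl_rename_inr (i : σ) (g : MvPolynomial τ ℂ) :
    pderiv (Sum.inl i) (rename (Sum.inr : τ → σ ⊕ τ) g) = 0 := by
  induction g using MvPolynomial.induction_on with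
  | C a => simp
  | add p q hp hq => simp [hp, hq]
  | mul_X p j hp => simp [hp, pderiv_X, Pi.single_apply]

lemma pderiv_inr_rename_inl (j : τ) (f : MvPolynomial σ ℂ) :
    pderiv (Sum.inr j) (rename (Sum.inl : σ → σ ⊕ τ) f) = 0 := by
  induction f using MvPolynomial.induction_on with
  | C a => simp
  | add p q hp hq => simp [hp, hq]
  | mul_X p i hp => simp [hp, pderiv_X, Pi.single_apply]

lemma diffHom_rename_inl_apply (p : MvPolynomial σ ℂ) :
    ∀ (f : MvPolynomial σ ℂ) (g : MvPolynomial τ ℂ),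
    diffHom (σ ⊕ τ) (rename Sum.inl p) (rename Sum.inl f * rename Sum.inr g) =
      rename Sum.inl (diffHom σ p f) * rename Sum.inr g := by
  induction p using MvPolynomial.induction_on with
  | C a =>
      intro f g
      rw [rename_C, diffHom_C_apply, diffHom_C_apply, map_smul, smul_mul_assoc]
  | add p q hp hq =>
      intro f g
      simp [map_add, LinearMap.add_apply, hp, hq, add_mul]
  | mul_X p i hp =>
      intro f g
      rw [show rename (Sum.inl : σ → σ ⊕ τ) (p * X i)
            = rename Sum.inl p * X (Sum.inl i) by rw [map_mul, rename_X],
        diffHom_mul_apply, diffHom_X_apply, pderiv_mul,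
        pderiv_inl_rename_inr, mul_zero, add_zero,
        pderiv_rename Sum.inl_injective, hp, diffHom_mul_apply, diffHom_X_apply]

lemma diffHom_rename_inr_apply (q : MvPolynomial τ ℂ) :
    ∀ (g : MvPolynomial τ ℂ) (f : MvPolynomial σ ℂ),
    diffHom (σ ⊕ τ) (rename Sum.inr q) (rename Sum.inl f * rename Sum.inr g) =
      rename Sum.inl f * rename Sum.inr (diffHom τ q g) := by
  induction q using MvPolynomial.induction_on with
  | C a =>
      intro g f
      rw [rename_C, diffHom_C_apply, diffHom_C_apply, map_smul, mul_smul_comm]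
  | add p q hp hq =>
      intro g f
      simp [map_add, LinearMap.add_apply, hp, hq, mul_add]
  | mul_X p j hp =>
      intro g f
      rw [show rename (Sum.inr : τ → σ ⊕ τ) (p * X j)
            = rename Sum.inr p * X (Sum.inr j) by rw [map_mul, rename_X],
        diffHom_mul_apply, diffHom_X_apply, pderiv_mul,
        pderiv_inr_rename_inl, zero_mul, zero_add,
        pderiv_rename Sum.inr_injective, hp, diffHom_mul_apply, diffHom_X_apply]

lemma diffHom_prod (p f : MvPolynomial σ ℂ) (q g : MvPolynomial τ ℂ) :
    diffHom (σ ⊕ τ) (rename Sum.inl p * rename Sum.inr q)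
      (rename Sum.inl f * rename Sum.inr g) =
      rename Sum.inl (diffHom σ p f) * rename Sum.inr (diffHom τ q g) := by
  rw [diffHom_mul_apply, diffHom_rename_inr_apply, diffHom_rename_inl_apply]

end Aux2
section Aux3
variable {σ τ : Type*} [DecidableEq σ] [DecidableEq τ]

omit [DecidableEq σ] [DecidableEq τ] in
lemma sumAlgEquiv_rename_inr_apply (g : MvPolynomial σ ℂ) :
    sumAlgEquiv ℂ τ σ (rename Sum.inr g) = C g := by
  have h := AlgHom.congr_fun (sumAlgEquiv_comp_rename_inr ℂ τ σ) g
  simpa [algebraMap_eq] using h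

omit [DecidableEq σ] [DecidableEq τ] in
lemma sumAlgEquiv_rename_inl_apply (h : MvPolynomial τ ℂ) :
    sumAlgEquiv ℂ τ σ (rename Sum.inl h) = map (C : ℂ →+* MvPolynomial σ ℂ) h := by
  have h2 := AlgHom.congr_fun (sumAlgEquiv_comp_rename_inl ℂ τ σ) h
  simp only [AlgHom.coe_comp, AlgEquiv.toAlgHom_eq_coe, AlgHom.coe_coe, Function.comp_apply] at h2
  refine h2.trans ?_
  rfl

omit [DecidableEq σ] [DecidableEq τ] in
lemma indep_factor_zero {ι : Type*} (S : Finset ι)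
    (g : ι → MvPolynomial σ ℂ) (h : ι → MvPolynomial τ ℂ)
    (hind : LinearIndependent ℂ (fun a : S => g a))
    (heq : ∑ a ∈ S, rename (Sum.inl : σ → σ ⊕ τ) (g a) * rename (Sum.inr : τ → σ ⊕ τ) (h a) = 0) :
    ∀ a ∈ S, h a = 0 := by
  have e1 : (Sum.swap ∘ Sum.inl : σ → τ ⊕ σ) = Sum.inr := by funext x; simp
  have e2 : (Sum.swap ∘ Sum.inr : τ → τ ⊕ σ) = Sum.inl := by funext x; simp
  have key : ∀ ν : τ →₀ ℕ, ∑ a ∈ S, (coeff ν (h a)) • g a = 0 := by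
    intro ν
    have term : ∀ a, coeff ν ((sumAlgEquiv ℂ τ σ)
        ((rename (Sum.swap : σ ⊕ τ → τ ⊕ σ))
          (rename (Sum.inl : σ → σ ⊕ τ) (g a) * rename (Sum.inr : τ → σ ⊕ τ) (h a)))) =
        coeff ν (h a) • g a := by
      intro a
      rw [map_mul, map_mul, rename_rename, rename_rename, e1, e2,
        sumAlgEquiv_rename_inr_apply, sumAlgEquiv_rename_inl_apply,
        coeff_C_mul, coeff_map, smul_eq_C_mul, mul_comm]
    have h1 := congrArg
      (fun z => coeff ν ((sumAlgEquiv ℂ τ σ) ((rename (Sum.swap : σ ⊕ τ → τ ⊕ σ)) z))) heq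
    simp only [map_sum, coeff_sum, map_zero, coeff_zero, term] at h1
    exact h1
  intro a ha
  ext ν
  have h2 := Fintype.linearIndependent_iff.mp hind (fun a => coeff ν (h a)) ?_ ⟨a, ha⟩
  · simpa using h2
  · rw [Finset.sum_coe_sort S (fun a => coeff ν (h a) • g a)]
    exact key ν

end Aux3
section Aux4
variable {σ τ : Type*} [DecidableEq σ] [DecidableEq τ]

lemma diffHom_smul_apply (c : ℂ) (p f : MvPolynomial σ ℂ) :
    diffHom σ (c • p) f = c • diffHom σ p f := by
  rw [smul_eq_C_mul, diffHom_mul_apply, diffHom_C_apply]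

lemma sum_mem_sup (f₁ : MvPolynomial σ ℂ) (f₂ : MvPolynomial τ ℂ) (S : Finset (σ →₀ ℕ)) :
    ∀ q : (σ →₀ ℕ) → MvPolynomial τ ℂ,
    (∑ a ∈ S, rename (Sum.inl : σ → σ ⊕ τ) (diffHom σ (monomial a 1) f₁) *
        rename (Sum.inr : τ → σ ⊕ τ) (diffHom τ (q a) f₂)) = 0 →
    (∑ a ∈ S, rename (Sum.inl : σ → σ ⊕ τ) (monomial a 1) *
        rename (Sum.inr : τ → σ ⊕ τ) (q a)) ∈
      Ideal.map (rename (Sum.inl : σ → σ ⊕ τ)) (apolarIdeal f₁) ⊔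
        Ideal.map (rename (Sum.inr : τ → σ ⊕ τ)) (apolarIdeal f₂) := by
  induction S using Finset.strongInduction with
  | _ S ih =>
    intro q hq
    by_cases hind :
        LinearIndependent ℂ (fun a : S => diffHom σ (monomial (a : σ →₀ ℕ) 1) f₁)
    · have hz := indep_factor_zero S (fun a => diffHom σ (monomial a 1) f₁)
        (fun a => diffHom τ (q a) f₂) hind hq
      refine Submodule.sum_mem _ fun a ha => Ideal.mem_sup_right ?_
      exact Ideal.mul_mem_left _ _ (Ideal.mem_map_of_mem _ (hz a ha))
    · obtain ⟨c, hc0, a₀s, hca₀⟩ := Fintype.not_linearIndependent_iff.mp hind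
      have ha₀ : (a₀s : σ →₀ ℕ) ∈ S := a₀s.2
      set a₀ : σ →₀ ℕ := (a₀s : σ →₀ ℕ) with ha₀def
      set d : (σ →₀ ℕ) → ℂ := fun a => if h : a ∈ S then (c a₀s)⁻¹ * c ⟨a, h⟩ else 0 with hddef
      have hdi : ∀ i : S, d (i : σ →₀ ℕ) = (c a₀s)⁻¹ * c i := fun i => dif_pos i.2
      have hda₀ : d a₀ = 1 := by
        rw [hdi a₀s, inv_mul_cancel₀ hca₀]
      have hsum : ∑ a ∈ S, d a • diffHom σ (monomial a 1) f₁ = 0 := by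
        rw [← Finset.sum_coe_sort S (fun a => d a • diffHom σ (monomial a 1) f₁)]
        calc ∑ i : S, d (i : σ →₀ ℕ) • diffHom σ (monomial (i : σ →₀ ℕ) 1) f₁
            = (c a₀s)⁻¹ • ∑ i : S, c i • diffHom σ (monomial (i : σ →₀ ℕ) 1) f₁ := by
              rw [Finset.smul_sum]
              exact Finset.sum_congr rfl fun i _ => by rw [hdi i, mul_smul]
          _ = 0 := by rw [hc0, smul_zero]
      set r : MvPolynomial σ ℂ := ∑ a ∈ S, d a • monomial a 1 with hrdef
      have hr : r ∈ apolarIdeal f₁ := by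
        rw [mem_apolarIdeal_iff, hrdef, map_sum, LinearMap.coe_sum, Finset.sum_apply]
        rw [← hsum]
        exact Finset.sum_congr rfl fun a _ => diffHom_smul_apply (d a) (monomial a 1) f₁
      have e1 : (∑ a ∈ S.erase a₀, rename (Sum.inl : σ → σ ⊕ τ) (monomial a 1) *
            rename (Sum.inr : τ → σ ⊕ τ) (q a)) +
            rename (Sum.inl : σ → σ ⊕ τ) (monomial a₀ 1) * rename (Sum.inr : τ → σ ⊕ τ) (q a₀)
          = ∑ a ∈ S, rename (Sum.inl : σ → σ ⊕ τ) (monomial a 1) *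
              rename (Sum.inr : τ → σ ⊕ τ) (q a) :=
        Finset.sum_erase_add S _ ha₀
      have hT : rename (Sum.inl : σ → σ ⊕ τ) r * rename (Sum.inr : τ → σ ⊕ τ) (q a₀)
          = ∑ a ∈ S, d a • (rename (Sum.inl : σ → σ ⊕ τ) (monomial a 1) *
              rename (Sum.inr : τ → σ ⊕ τ) (q a₀)) := by
        rw [hrdef, map_sum, Finset.sum_mul]
        exact Finset.sum_congr rfl fun a _ => by rw [map_smul, smul_mul_assoc]
      have e2 : (∑ a ∈ S.erase a₀, d a • (rename (Sum.inl : σ → σ ⊕ τ) (monomial a 1) *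
            rename (Sum.inr : τ → σ ⊕ τ) (q a₀))) +
            d a₀ • (rename (Sum.inl : σ → σ ⊕ τ) (monomial a₀ 1) *
              rename (Sum.inr : τ → σ ⊕ τ) (q a₀))
          = ∑ a ∈ S, d a • (rename (Sum.inl : σ → σ ⊕ τ) (monomial a 1) *
              rename (Sum.inr : τ → σ ⊕ τ) (q a₀)) :=
        Finset.sum_erase_add S _ ha₀
      have key : (∑ a ∈ S, rename (Sum.inl : σ → σ ⊕ τ) (monomial a 1) *
            rename (Sum.inr : τ → σ ⊕ τ) (q a))
          = rename (Sum.inl : σ → σ ⊕ τ) r * rename (Sum.inr : τ → σ ⊕ τ) (q a₀)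
            + ∑ a ∈ S.erase a₀, rename (Sum.inl : σ → σ ⊕ τ) (monomial a 1) *
                rename (Sum.inr : τ → σ ⊕ τ) (q a - d a • q a₀) := by
        have hterm : ∀ a : σ →₀ ℕ, rename (Sum.inl : σ → σ ⊕ τ) (monomial a 1) *
              rename (Sum.inr : τ → σ ⊕ τ) (q a - d a • q a₀)
            = rename (Sum.inl : σ → σ ⊕ τ) (monomial a 1) * rename (Sum.inr : τ → σ ⊕ τ) (q a)
              - d a • (rename (Sum.inl : σ → σ ⊕ τ) (monomial a 1) *
                  rename (Sum.inr : τ → σ ⊕ τ) (q a₀)) := by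
          intro a
          rw [map_sub, map_smul, mul_sub, mul_smul_comm]
        rw [hT, Finset.sum_congr rfl fun a _ => hterm a, Finset.sum_sub_distrib,
          ← e1, ← e2, hda₀, one_smul]
        ring
      rw [key]
      refine Submodule.add_mem _
        (Ideal.mem_sup_left (Ideal.mul_mem_right _ _ (Ideal.mem_map_of_mem _ hr))) ?_
      refine ih (S.erase a₀) (Finset.erase_ssubset ha₀) (fun a => q a - d a • q a₀) ?_
      have hdq : ∀ a : σ →₀ ℕ, diffHom τ (q a - d a • q a₀) f₂
          = diffHom τ (q a) f₂ - d a • diffHom τ (q a₀) f₂ := by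
        intro a
        rw [map_sub, LinearMap.sub_apply, diffHom_smul_apply]
      have hterm2 : ∀ a : σ →₀ ℕ, rename (Sum.inl : σ → σ ⊕ τ) (diffHom σ (monomial a 1) f₁) *
            rename (Sum.inr : τ → σ ⊕ τ) (diffHom τ (q a - d a • q a₀) f₂)
          = rename (Sum.inl : σ → σ ⊕ τ) (diffHom σ (monomial a 1) f₁) *
              rename (Sum.inr : τ → σ ⊕ τ) (diffHom τ (q a) f₂)
            - d a • (rename (Sum.inl : σ → σ ⊕ τ) (diffHom σ (monomial a 1) f₁) *
                rename (Sum.inr : τ → σ ⊕ τ) (diffHom τ (q a₀) f₂)) := by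
        intro a
        rw [hdq, map_sub, map_smul, mul_sub, mul_smul_comm]
      have hGsum : ∑ a ∈ S, d a • (rename (Sum.inl : σ → σ ⊕ τ) (diffHom σ (monomial a 1) f₁) *
            rename (Sum.inr : τ → σ ⊕ τ) (diffHom τ (q a₀) f₂)) = 0 := by
        have h3 : ∑ a ∈ S, d a • (rename (Sum.inl : σ → σ ⊕ τ) (diffHom σ (monomial a 1) f₁) *
              rename (Sum.inr : τ → σ ⊕ τ) (diffHom τ (q a₀) f₂))
            = rename (Sum.inl : σ → σ ⊕ τ) (∑ a ∈ S, d a • diffHom σ (monomial a 1) f₁) *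
                rename (Sum.inr : τ → σ ⊕ τ) (diffHom τ (q a₀) f₂) := by
          rw [map_sum, Finset.sum_mul]
          exact Finset.sum_congr rfl fun a _ => by rw [map_smul, smul_mul_assoc]
        rw [h3, hsum, map_zero, zero_mul]
      have e3 : (∑ a ∈ S.erase a₀,
            rename (Sum.inl : σ → σ ⊕ τ) (diffHom σ (monomial a 1) f₁) *
              rename (Sum.inr : τ → σ ⊕ τ) (diffHom τ (q a) f₂)) +
            rename (Sum.inl : σ → σ ⊕ τ) (diffHom σ (monomial a₀ 1) f₁) *
              rename (Sum.inr : τ → σ ⊕ τ) (diffHom τ (q a₀) f₂)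
          = ∑ a ∈ S, rename (Sum.inl : σ → σ ⊕ τ) (diffHom σ (monomial a 1) f₁) *
              rename (Sum.inr : τ → σ ⊕ τ) (diffHom τ (q a) f₂) :=
        Finset.sum_erase_add S _ ha₀
      have e4 : (∑ a ∈ S.erase a₀,
            d a • (rename (Sum.inl : σ → σ ⊕ τ) (diffHom σ (monomial a 1) f₁) *
              rename (Sum.inr : τ → σ ⊕ τ) (diffHom τ (q a₀) f₂))) +
            d a₀ • (rename (Sum.inl : σ → σ ⊕ τ) (diffHom σ (monomial a₀ 1) f₁) *
              rename (Sum.inr : τ → σ ⊕ τ) (diffHom τ (q a₀) f₂))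
          = ∑ a ∈ S, d a • (rename (Sum.inl : σ → σ ⊕ τ) (diffHom σ (monomial a 1) f₁) *
              rename (Sum.inr : τ → σ ⊕ τ) (diffHom τ (q a₀) f₂)) :=
        Finset.sum_erase_add S _ ha₀
      rw [Finset.sum_congr rfl fun a _ => hterm2 a, Finset.sum_sub_distrib]
      rw [hda₀, one_smul] at e4
      rw [hq] at e3
      rw [hGsum] at e4
      linear_combination e3 - e4

end Aux4
section Aux5
variable {σ τ : Type*} [DecidableEq σ] [DecidableEq τ]

omit [DecidableEq σ] [DecidableEq τ] in
lemma decomp (D : MvPolynomial (σ ⊕ τ) ℂ) :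
    D = ∑ a ∈ (sumAlgEquiv ℂ σ τ D).support,
      rename (Sum.inl : σ → σ ⊕ τ) (monomial a 1) *
        rename (Sum.inr : τ → σ ⊕ τ) (coeff a (sumAlgEquiv ℂ σ τ D)) := by
  apply (sumAlgEquiv ℂ σ τ).injective
  rw [map_sum]
  conv_lhs => rw [← support_sum_monomial_coeff (sumAlgEquiv ℂ σ τ D)]
  refine Finset.sum_congr rfl fun a _ => ?_
  rw [map_mul, sumAlgEquiv_rename_inr_apply, sumAlgEquiv_rename_inl_apply, map_monomial,
    map_one, mul_comm, C_mul_monomial, mul_one]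

end Aux5

/-- For nonzero homogeneous polynomials `f₁`, `f₂` in disjoint sets of variables, the apolar
ideal of `t = f₁ f₂` equals the sum of the extensions of the apolar ideals of the factors. -/
theorem apolarIdeal_mul (m₁ m₂ d₁ d₂ : ℕ)
    (f₁ : MvPolynomial (Fin m₁) ℂ) (f₂ : MvPolynomial (Fin m₂) ℂ)
    (hf₁ : f₁.IsHomogeneous d₁) (hf₂ : f₂.IsHomogeneous d₂)
    (hf₁0 : f₁ ≠ 0) (hf₂0 : f₂ ≠ 0) :
    apolarIdeal (rename Sum.inl f₁ * rename Sum.inr f₂) =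
      Ideal.map (rename (Sum.inl : Fin m₁ → Fin m₁ ⊕ Fin m₂)) (apolarIdeal f₁)
        ⊔ Ideal.map (rename (Sum.inr : Fin m₂ → Fin m₁ ⊕ Fin m₂)) (apolarIdeal f₂) := by

  apply le_antisymm
  · intro D hD
    rw [mem_apolarIdeal_iff] at hD
    have hdec := decomp D
    rw [hdec] at hD ⊢
    apply sum_mem_sup f₁ f₂ _ (fun a => coeff a (sumAlgEquiv ℂ (Fin m₁) (Fin m₂) D))
    rw [← hD, map_sum, LinearMap.coe_sum, Finset.sum_apply]
    exact Finset.sum_congr rfl fun a _ =>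
      (diffHom_prod (monomial a 1) f₁ (coeff a (sumAlgEquiv ℂ (Fin m₁) (Fin m₂) D)) f₂).symm
  · refine sup_le ?_ ?_
    · rw [Ideal.map_le_iff_le_comap]
      intro p hp
      rw [Ideal.mem_comap, mem_apolarIdeal_iff, diffHom_rename_inl_apply,
        (mem_apolarIdeal_iff f₁ p).mp hp, map_zero, zero_mul]
    · rw [Ideal.map_le_iff_le_comap]
      intro p hp
      rw [Ideal.mem_comap, mem_apolarIdeal_iff, diffHom_rename_inr_apply,
        (mem_apolarIdeal_iff f₂ p).mp hp, map_zero, mul_zero]
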